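/- Let α > 1, c > 0, ξ = 1/α, and 0 < p < q ≤ 1. Let F be the Pareto(α,c) CDF, so that f(F⁻¹(x)) = (α/c)(1−x)^(1+1/α), and let J(x) = 1[1−q < x ≤ 1−p]. Then ∫₀¹∫₀¹ [J(x₁)J(x₂)/(f(F⁻¹(x₁)) f(F⁻¹(x₂)))] (min{x₁,x₂} − x₁x₂) dx₁ dx₂ = (2c²ξ²/(1−ξ)) [ T(p,q) + p^(1−ξ)(q^(−ξ) − p^(−ξ))/ξ + (2p^(1−ξ)q^(1−ξ) − p^(2−2ξ) − q^(2−2ξ))/(2−2ξ) ], where T(p,q) = (q^(1−2ξ) − p^(1−2ξ))/(1−2ξ) if ξ ≠ 1/2 and T(p,q) = log(q/p) if ξ = 1/2. -/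

import Mathlib

open MeasureTheory intervalIntegral Real

lemma indic_int (a b : ℝ) (h0 : 0 ≤ a) (hab : a ≤ b) (hb : b ≤ 1) (g : ℝ → ℝ) :
    (∫ x in (0:ℝ)..1, (if a < x ∧ x ≤ b then (1:ℝ) else 0) * g x) = ∫ x in a..b, g x := by
  rw [integral_of_le (by norm_num : (0:ℝ) ≤ 1), integral_of_le hab]
  have h1 : ∀ x : ℝ, (if a < x ∧ x ≤ b then (1:ℝ) else 0) * g x
      = (Set.Ioc a b).indicator g x := by
    intro x
    by_cases hx : a < x ∧ x ≤ b
    · simp [Set.indicator_apply, Set.mem_Ioc, hx.1, hx.2]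
    · rw [if_neg hx, Set.indicator_apply, if_neg (by simpa [Set.mem_Ioc] using hx), zero_mul]
  simp_rw [h1]
  rw [MeasureTheory.setIntegral_indicator measurableSet_Ioc,
    Set.inter_eq_self_of_subset_right (Set.Ioc_subset_Ioc h0 hb)]

lemma rint (r d s t : ℝ) (hs : 0 < s) (hst : s ≤ t) :
    IntervalIntegrable (fun u : ℝ => d * u ^ (r:ℝ)) volume s t := by
  apply ContinuousOn.intervalIntegrable
  apply ContinuousOn.mul continuousOn_const
  apply ContinuousOn.rpow_const continuousOn_id
  intro x hx
  rw [Set.uIcc_of_le hst] at hx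
  exact Or.inl (lt_of_lt_of_le hs hx.1).ne'

lemma aux_int2 (ξ c w s t : ℝ) (hξ0 : 0 < ξ) (hξ1 : ξ < 1) (hc : 0 < c)
    (hs : 0 < s) (hst : s ≤ t) :
    (∫ u in s..t, (w * u) / (1/ξ/c * u ^ (1+ξ:ℝ)))
      = c*ξ*w*((t ^ (1-ξ:ℝ) - s ^ (1-ξ:ℝ))/(1-ξ)) := by
  have h0 : Set.EqOn (fun u : ℝ => (w * u) / (1/ξ/c * u ^ (1+ξ:ℝ)))
      (fun u : ℝ => (c*ξ*w) * u ^ (-ξ:ℝ)) (Set.uIcc s t) := by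
    intro u hu
    rw [Set.uIcc_of_le hst] at hu
    have hu0 : 0 < u := lt_of_lt_of_le hs hu.1
    have e : u ^ (-ξ:ℝ) = u * (u ^ (1+ξ:ℝ))⁻¹ := by
      rw [show (-ξ:ℝ) = 1 + -(1+ξ) by ring, Real.rpow_add hu0, Real.rpow_one,
        Real.rpow_neg hu0.le]
    have hA : u ^ (1+ξ:ℝ) ≠ 0 := (Real.rpow_pos_of_pos hu0 _).ne'
    dsimp only
    rw [e]
    field_simp
  rw [intervalIntegral.integral_congr h0, intervalIntegral.integral_const_mul,
    integral_rpow (Or.inl (by linarith : (-1:ℝ) < -ξ)),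
    show (-ξ+1:ℝ) = 1-ξ by ring]

lemma aux_int1 (ξ c w s t : ℝ) (hξ0 : 0 < ξ) (hξ1 : ξ < 1) (hc : 0 < c)
    (hs : 0 < s) (hst : s ≤ t) :
    (∫ u in s..t, ((1-u) * w) / (1/ξ/c * u ^ (1+ξ:ℝ)))
      = c*ξ*w*((s ^ (-ξ:ℝ) - t ^ (-ξ:ℝ))/ξ)
        - c*ξ*w*((t ^ (1-ξ:ℝ) - s ^ (1-ξ:ℝ))/(1-ξ)) := by
  have h0 : Set.EqOn (fun u : ℝ => ((1-u) * w) / (1/ξ/c * u ^ (1+ξ:ℝ)))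
      (fun u : ℝ => (c*ξ*w) * u ^ (-1-ξ:ℝ) - (c*ξ*w) * u ^ (-ξ:ℝ)) (Set.uIcc s t) := by
    intro u hu
    rw [Set.uIcc_of_le hst] at hu
    have hu0 : 0 < u := lt_of_lt_of_le hs hu.1
    have e1 : u ^ (-1-ξ:ℝ) = (u ^ (1+ξ:ℝ))⁻¹ := by
      rw [show (-1-ξ:ℝ) = -(1+ξ) by ring, Real.rpow_neg hu0.le]
    have e2 : u ^ (-ξ:ℝ) = u * (u ^ (1+ξ:ℝ))⁻¹ := by
      rw [show (-ξ:ℝ) = 1 + -(1+ξ) by ring, Real.rpow_add hu0, Real.rpow_one,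
        Real.rpow_neg hu0.le]
    have hA : u ^ (1+ξ:ℝ) ≠ 0 := (Real.rpow_pos_of_pos hu0 _).ne'
    dsimp only
    rw [e1, e2]
    field_simp
  rw [intervalIntegral.integral_congr h0,
    intervalIntegral.integral_sub (rint _ _ _ _ hs hst) (rint _ _ _ _ hs hst),
    intervalIntegral.integral_const_mul, intervalIntegral.integral_const_mul,
    integral_rpow (Or.inr ⟨by intro h; exact hξ0.ne' (by linarith), by
      rw [Set.uIcc_of_le hst]; exact fun h => absurd h.1 (by linarith)⟩),
    integral_rpow (Or.inl (by linarith : (-1:ℝ) < -ξ)),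
    show (-1-ξ+1:ℝ) = -ξ by ring, show (-ξ+1:ℝ) = 1-ξ by ring]
  ring

theorem stmt1 (α c ξ p q : ℝ) (hα : 1 < α) (hc : 0 < c) (hξ : ξ = 1 / α)
    (hp : 0 < p) (hpq : p < q) (hq : q ≤ 1) :
    (∫ x₁ in (0:ℝ)..1, ∫ x₂ in (0:ℝ)..1,
        ((if 1 - q < x₁ ∧ x₁ ≤ 1 - p then (1:ℝ) else 0) *
            (if 1 - q < x₂ ∧ x₂ ≤ 1 - p then (1:ℝ) else 0) /
          ((α / c * (1 - x₁) ^ (1 + 1 / α)) * (α / c * (1 - x₂) ^ (1 + 1 / α)))) *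
          (min x₁ x₂ - x₁ * x₂))
      = 2 * c ^ 2 * ξ ^ 2 / (1 - ξ) *
          ((if ξ = 1 / 2 then Real.log (q / p)
              else (q ^ (1 - 2 * ξ) - p ^ (1 - 2 * ξ)) / (1 - 2 * ξ)) +
            p ^ (1 - ξ) * (q ^ (-ξ) - p ^ (-ξ)) / ξ +
            (2 * p ^ (1 - ξ) * q ^ (1 - ξ) - p ^ (2 - 2 * ξ) - q ^ (2 - 2 * ξ)) /
              (2 - 2 * ξ)) := by
  have hα0 : (0:ℝ) < α := by linarith
  have hξ0 : 0 < ξ := by rw [hξ]; positivity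
  have hξ1 : ξ < 1 := by rw [hξ, div_lt_one hα0]; exact hα
  have hq0 : 0 < q := hp.trans hpq
  have h0a : (0:ℝ) ≤ 1 - q := by linarith
  have hab : (1:ℝ) - q ≤ 1 - p := by linarith
  have hb1 : (1:ℝ) - p ≤ 1 := by linarith
  have hαe : α = 1/ξ := by rw [hξ, one_div_one_div]
  rw [hαe, one_div_one_div]
  have key : ∀ x₁ : ℝ, (∫ x₂ in (0:ℝ)..1,
        ((if 1 - q < x₁ ∧ x₁ ≤ 1 - p then (1:ℝ) else 0) *
            (if 1 - q < x₂ ∧ x₂ ≤ 1 - p then (1:ℝ) else 0) /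
          ((1/ξ / c * (1 - x₁) ^ (1 + ξ:ℝ)) * (1/ξ / c * (1 - x₂) ^ (1 + ξ:ℝ)))) *
          (min x₁ x₂ - x₁ * x₂))
      = (if 1 - q < x₁ ∧ x₁ ≤ 1 - p then (1:ℝ) else 0) *
        ((∫ x₂ in (1-q)..(1-p),
            (min x₁ x₂ - x₁ * x₂) / (1/ξ / c * (1 - x₂) ^ (1 + ξ:ℝ)))
          * (1/ξ / c * (1 - x₁) ^ (1 + ξ:ℝ))⁻¹) := by
    intro x₁
    have hsh : (fun x₂ : ℝ =>
        ((if 1 - q < x₁ ∧ x₁ ≤ 1 - p then (1:ℝ) else 0) *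
            (if 1 - q < x₂ ∧ x₂ ≤ 1 - p then (1:ℝ) else 0) /
          ((1/ξ / c * (1 - x₁) ^ (1 + ξ:ℝ)) * (1/ξ / c * (1 - x₂) ^ (1 + ξ:ℝ)))) *
          (min x₁ x₂ - x₁ * x₂))
        = fun x₂ : ℝ => (if 1 - q < x₁ ∧ x₁ ≤ 1 - p then (1:ℝ) else 0) *
            ((if 1 - q < x₂ ∧ x₂ ≤ 1 - p then (1:ℝ) else 0) *
              ((min x₁ x₂ - x₁ * x₂) / (1/ξ / c * (1 - x₂) ^ (1 + ξ:ℝ))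
                * (1/ξ / c * (1 - x₁) ^ (1 + ξ:ℝ))⁻¹)) := by
      funext x₂; ring
    rw [hsh, intervalIntegral.integral_const_mul,
      indic_int _ _ h0a hab hb1 _, intervalIntegral.integral_mul_const]
  simp only [key]
  rw [indic_int _ _ h0a hab hb1]
  have hW : Set.EqOn
      (fun x₁ : ℝ => (∫ x₂ in (1-q)..(1-p),
          (min x₁ x₂ - x₁ * x₂) / (1/ξ / c * (1 - x₂) ^ (1 + ξ:ℝ)))
        * (1/ξ / c * (1 - x₁) ^ (1 + ξ:ℝ))⁻¹)
      (fun x₁ : ℝ => (fun v : ℝ =>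
          (c*ξ*v*((v ^ (-ξ:ℝ) - q ^ (-ξ:ℝ))/ξ)
            - c*ξ*v*((q ^ (1-ξ:ℝ) - v ^ (1-ξ:ℝ))/(1-ξ))
            + c*ξ*(1-v)*((v ^ (1-ξ:ℝ) - p ^ (1-ξ:ℝ))/(1-ξ)))
          * (1/ξ / c * v ^ (1 + ξ:ℝ))⁻¹) (1 - x₁))
      (Set.uIcc (1-q) (1-p)) := by
    intro x₁ hx₁
    rw [Set.uIcc_of_le hab] at hx₁
    obtain ⟨hx₁a, hx₁b⟩ := hx₁
    have hv0 : 0 < 1 - x₁ := by linarith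
    have hvq : 1 - x₁ ≤ q := by linarith
    have hpv : p ≤ 1 - x₁ := by linarith
    have hcont : ContinuousOn
        (fun x₂ : ℝ => (min x₁ x₂ - x₁ * x₂) / (1/ξ / c * (1 - x₂) ^ (1 + ξ:ℝ)))
        (Set.Icc (1-q) (1-p)) := by
      apply ContinuousOn.div
      · exact ((continuous_const.min continuous_id).sub
          (continuous_const.mul continuous_id)).continuousOn
      · apply ContinuousOn.mul continuousOn_const
        apply ContinuousOn.rpow_const (continuous_const.sub continuous_id).continuousOn
        intro x hx
        exact Or.inl (by simp only [Set.mem_Icc] at hx; have := hx.2; intro h; simp at h; linarith)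
      · intro x hx
        simp only [Set.mem_Icc] at hx
        have h1 : (0:ℝ) < (1 - x) ^ (1 + ξ:ℝ) :=
          Real.rpow_pos_of_pos (by linarith [hx.2]) _
        exact (mul_pos (div_pos (div_pos one_pos hξ0) hc) h1).ne'
    have int1 : IntervalIntegrable
        (fun x₂ : ℝ => (min x₁ x₂ - x₁ * x₂) / (1/ξ / c * (1 - x₂) ^ (1 + ξ:ℝ)))
        volume (1-q) x₁ := by
      apply ContinuousOn.intervalIntegrable
      apply hcont.mono
      rw [Set.uIcc_of_le hx₁a]
      exact Set.Icc_subset_Icc_right hx₁b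
    have int2 : IntervalIntegrable
        (fun x₂ : ℝ => (min x₁ x₂ - x₁ * x₂) / (1/ξ / c * (1 - x₂) ^ (1 + ξ:ℝ)))
        volume x₁ (1-p) := by
      apply ContinuousOn.intervalIntegrable
      apply hcont.mono
      rw [Set.uIcc_of_le hx₁b]
      exact Set.Icc_subset_Icc_left hx₁a
    have hsplit := (intervalIntegral.integral_add_adjacent_intervals int1 int2).symm
    have hp1 : (∫ x₂ in (1-q)..x₁,
          (min x₁ x₂ - x₁ * x₂) / (1/ξ / c * (1 - x₂) ^ (1 + ξ:ℝ)))
        = c*ξ*(1-x₁)*(((1-x₁) ^ (-ξ:ℝ) - q ^ (-ξ:ℝ))/ξ)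
          - c*ξ*(1-x₁)*((q ^ (1-ξ:ℝ) - (1-x₁) ^ (1-ξ:ℝ))/(1-ξ)) := by
      have hcg : Set.EqOn
          (fun x₂ : ℝ => (min x₁ x₂ - x₁ * x₂) / (1/ξ / c * (1 - x₂) ^ (1 + ξ:ℝ)))
          (fun x₂ : ℝ => ((1-(1-x₂))*(1-x₁)) / (1/ξ / c * (1 - x₂) ^ (1 + ξ:ℝ)))
          (Set.uIcc (1-q) x₁) := by
        intro x₂ hx₂
        rw [Set.uIcc_of_le hx₁a] at hx₂
        dsimp only
        rw [min_eq_right hx₂.2]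
        congr 1
        ring
      rw [intervalIntegral.integral_congr hcg,
        intervalIntegral.integral_comp_sub_left
          (fun u : ℝ => ((1-u)*(1-x₁)) / (1/ξ / c * u ^ (1 + ξ:ℝ))) 1,
        sub_sub_cancel]
      exact aux_int1 ξ c (1-x₁) (1-x₁) q hξ0 hξ1 hc hv0 hvq
    have hp2 : (∫ x₂ in x₁..(1-p),
          (min x₁ x₂ - x₁ * x₂) / (1/ξ / c * (1 - x₂) ^ (1 + ξ:ℝ)))
        = c*ξ*x₁*(((1-x₁) ^ (1-ξ:ℝ) - p ^ (1-ξ:ℝ))/(1-ξ)) := by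
      have hcg : Set.EqOn
          (fun x₂ : ℝ => (min x₁ x₂ - x₁ * x₂) / (1/ξ / c * (1 - x₂) ^ (1 + ξ:ℝ)))
          (fun x₂ : ℝ => (x₁*(1-x₂)) / (1/ξ / c * (1 - x₂) ^ (1 + ξ:ℝ)))
          (Set.uIcc x₁ (1-p)) := by
        intro x₂ hx₂
        rw [Set.uIcc_of_le hx₁b] at hx₂
        dsimp only
        rw [min_eq_left hx₂.1]
        congr 1
        ring
      rw [intervalIntegral.integral_congr hcg,
        intervalIntegral.integral_comp_sub_left
          (fun u : ℝ => (x₁*u) / (1/ξ / c * u ^ (1 + ξ:ℝ))) 1,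
        sub_sub_cancel]
      exact aux_int2 ξ c x₁ p (1-x₁) hξ0 hξ1 hc hp hpv
    dsimp only
    rw [hsplit, hp1, hp2]
    ring
  rw [intervalIntegral.integral_congr hW,
    intervalIntegral.integral_comp_sub_left (fun v : ℝ =>
      (c*ξ*v*((v ^ (-ξ:ℝ) - q ^ (-ξ:ℝ))/ξ)
        - c*ξ*v*((q ^ (1-ξ:ℝ) - v ^ (1-ξ:ℝ))/(1-ξ))
        + c*ξ*(1-v)*((v ^ (1-ξ:ℝ) - p ^ (1-ξ:ℝ))/(1-ξ)))
      * (1/ξ / c * v ^ (1 + ξ:ℝ))⁻¹) 1,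
    sub_sub_cancel, sub_sub_cancel]
  have h1ξ : (1:ℝ) - ξ ≠ 0 := by intro h; exact (by linarith : ξ ≠ (1:ℝ)) (by linarith)
  have hdecomp : Set.EqOn
      (fun v : ℝ =>
        (c*ξ*v*((v ^ (-ξ:ℝ) - q ^ (-ξ:ℝ))/ξ)
          - c*ξ*v*((q ^ (1-ξ:ℝ) - v ^ (1-ξ:ℝ))/(1-ξ))
          + c*ξ*(1-v)*((v ^ (1-ξ:ℝ) - p ^ (1-ξ:ℝ))/(1-ξ)))
        * (1/ξ / c * v ^ (1 + ξ:ℝ))⁻¹)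
      (fun v : ℝ => (c*c*ξ/(1-ξ)) * v ^ (-(2*ξ):ℝ)
        + ((c*c*ξ*ξ*(p ^ (1-ξ:ℝ) - q ^ (1-ξ:ℝ))/(1-ξ) - c*c*ξ*q ^ (-ξ:ℝ)) * v ^ (-ξ:ℝ)
          + (-(c*c*ξ*ξ*p ^ (1-ξ:ℝ)/(1-ξ))) * v ^ (-1-ξ:ℝ)))
      (Set.uIcc p q) := by
    intro v hv
    rw [Set.uIcc_of_le hpq.le] at hv
    have hv0 : 0 < v := lt_of_lt_of_le hp hv.1
    have e1 : v ^ (1+ξ:ℝ) = v * (v ^ (-ξ:ℝ))⁻¹ := by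
      rw [show (1+ξ:ℝ) = 1 + -(-ξ) by ring, Real.rpow_add hv0, Real.rpow_one,
        Real.rpow_neg hv0.le]
    have e2 : v ^ (1-ξ:ℝ) = v * v ^ (-ξ:ℝ) := by
      rw [show (1-ξ:ℝ) = 1 + -ξ by ring, Real.rpow_add hv0, Real.rpow_one]
    have e3 : v ^ (-(2*ξ):ℝ) = v ^ (-ξ:ℝ) * v ^ (-ξ:ℝ) := by
      rw [show (-(2*ξ):ℝ) = -ξ + -ξ by ring, Real.rpow_add hv0]
    have e4 : v ^ (-1-ξ:ℝ) = v⁻¹ * v ^ (-ξ:ℝ) := by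
      rw [show (-1-ξ:ℝ) = -1 + -ξ by ring, Real.rpow_add hv0, Real.rpow_neg_one]
    have hX : v ^ (-ξ:ℝ) ≠ 0 := (Real.rpow_pos_of_pos hv0 _).ne'
    dsimp only
    rw [e1, e2, e3, e4]
    field_simp [h1ξ]
    ring
  rw [intervalIntegral.integral_congr hdecomp,
    intervalIntegral.integral_add (rint _ _ _ _ hp hpq.le)
      ((rint _ _ _ _ hp hpq.le).add (rint _ _ _ _ hp hpq.le)),
    intervalIntegral.integral_add (rint _ _ _ _ hp hpq.le) (rint _ _ _ _ hp hpq.le),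
    intervalIntegral.integral_const_mul, intervalIntegral.integral_const_mul,
    intervalIntegral.integral_const_mul]
  have hI3 : (∫ v in p..q, v ^ (-ξ:ℝ)) = (q ^ (1-ξ:ℝ) - p ^ (1-ξ:ℝ))/(1-ξ) := by
    rw [integral_rpow (Or.inl (by linarith : (-1:ℝ) < -ξ)), show (-ξ+1:ℝ) = 1-ξ by ring]
  have hI4 : (∫ v in p..q, v ^ (-1-ξ:ℝ)) = (q ^ (-ξ:ℝ) - p ^ (-ξ:ℝ))/(-ξ) := by
    rw [integral_rpow (Or.inr ⟨by intro h; exact hξ0.ne' (by linarith), by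
        rw [Set.uIcc_of_le hpq.le]; exact fun h => absurd h.1 (by linarith)⟩),
      show (-1-ξ+1:ℝ) = -ξ by ring]
  rw [hI3, hI4]
  have hP1 : p ^ (1-ξ:ℝ) = p * p ^ (-ξ:ℝ) := by
    rw [show (1-ξ:ℝ) = 1 + -ξ by ring, Real.rpow_add hp, Real.rpow_one]
  have hQ1 : q ^ (1-ξ:ℝ) = q * q ^ (-ξ:ℝ) := by
    rw [show (1-ξ:ℝ) = 1 + -ξ by ring, Real.rpow_add hq0, Real.rpow_one]
  by_cases hhalf : ξ = 1/2
  · rw [if_pos hhalf]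
    have hI1 : (∫ v in p..q, v ^ (-(2*ξ):ℝ)) = Real.log (q/p) := by
      have hfe : (fun v : ℝ => v ^ (-(2*ξ):ℝ)) = fun v : ℝ => v⁻¹ := by
        funext v; rw [show (-(2*ξ):ℝ) = -1 by rw [hhalf]; ring, Real.rpow_neg_one]
      rw [hfe, integral_inv (by
        rw [Set.uIcc_of_le hpq.le]; exact fun h => absurd h.1 (by linarith))]
    rw [hI1]
    have hP3 : p ^ (2-2*ξ:ℝ) = p := by
      rw [show (2-2*ξ:ℝ) = 1 by rw [hhalf]; ring, Real.rpow_one]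
    have hQ3 : q ^ (2-2*ξ:ℝ) = q := by
      rw [show (2-2*ξ:ℝ) = 1 by rw [hhalf]; ring, Real.rpow_one]
    have hXp : p ^ (-ξ:ℝ) = (p ^ (1-ξ:ℝ))⁻¹ := by
      refine eq_inv_of_mul_eq_one_left ?_
      rw [← Real.rpow_add hp, show (-ξ+(1-ξ):ℝ) = 0 by rw [hhalf]; ring, Real.rpow_zero]
    have hXq : q ^ (-ξ:ℝ) = (q ^ (1-ξ:ℝ))⁻¹ := by
      refine eq_inv_of_mul_eq_one_left ?_
      rw [← Real.rpow_add hq0, show (-ξ+(1-ξ):ℝ) = 0 by rw [hhalf]; ring, Real.rpow_zero]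
    have hRp : p ^ (1-ξ:ℝ) * p ^ (1-ξ:ℝ) = p := by
      rw [← Real.rpow_add hp, show ((1-ξ)+(1-ξ):ℝ) = 1 by rw [hhalf]; ring, Real.rpow_one]
    have hRq : q ^ (1-ξ:ℝ) * q ^ (1-ξ:ℝ) = q := by
      rw [← Real.rpow_add hq0, show ((1-ξ)+(1-ξ):ℝ) = 1 by rw [hhalf]; ring, Real.rpow_one]
    have hP1ne : p ^ (1-ξ:ℝ) ≠ 0 := (Real.rpow_pos_of_pos hp _).ne'
    have hQ1ne : q ^ (1-ξ:ℝ) ≠ 0 := (Real.rpow_pos_of_pos hq0 _).ne'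
    rw [hP3, hQ3, hXp, hXq]
    set P1 := p ^ (1-ξ:ℝ) with hP1def
    set Q1 := q ^ (1-ξ:ℝ) with hQ1def
    rw [← hRp, ← hRq, hhalf]
    field_simp
    ring
  · rw [if_neg hhalf]
    have hI1 : (∫ v in p..q, v ^ (-(2*ξ):ℝ))
        = (q ^ (1-2*ξ:ℝ) - p ^ (1-2*ξ:ℝ))/(1-2*ξ) := by
      rw [integral_rpow (Or.inr ⟨by
          intro h; exact hhalf (by linarith), by
          rw [Set.uIcc_of_le hpq.le]; exact fun h => absurd h.1 (by linarith)⟩),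
        show (-(2*ξ)+1:ℝ) = 1-2*ξ by ring]
    rw [hI1]
    have hP2 : p ^ (1-2*ξ:ℝ) = p * p ^ (-ξ:ℝ) * p ^ (-ξ:ℝ) := by
      rw [show (1-2*ξ:ℝ) = 1 + -ξ + -ξ by ring, Real.rpow_add hp, Real.rpow_add hp,
        Real.rpow_one]
    have hQ2 : q ^ (1-2*ξ:ℝ) = q * q ^ (-ξ:ℝ) * q ^ (-ξ:ℝ) := by
      rw [show (1-2*ξ:ℝ) = 1 + -ξ + -ξ by ring, Real.rpow_add hq0, Real.rpow_add hq0,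
        Real.rpow_one]
    have hP3 : p ^ (2-2*ξ:ℝ) = (p * p ^ (-ξ:ℝ)) * (p * p ^ (-ξ:ℝ)) := by
      rw [show (2-2*ξ:ℝ) = (1 + -ξ) + (1 + -ξ) by ring, Real.rpow_add hp,
        Real.rpow_add hp, Real.rpow_one]
    have hQ3 : q ^ (2-2*ξ:ℝ) = (q * q ^ (-ξ:ℝ)) * (q * q ^ (-ξ:ℝ)) := by
      rw [show (2-2*ξ:ℝ) = (1 + -ξ) + (1 + -ξ) by ring, Real.rpow_add hq0,
        Real.rpow_add hq0, Real.rpow_one]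
    have h12 : (1:ℝ) - 2*ξ ≠ 0 := by intro h; exact hhalf (by linarith)
    have h22 : (2:ℝ) - 2*ξ ≠ 0 := by intro h; exact (by linarith : ξ ≠ (1:ℝ)) (by linarith)
    have h12' : (1:ℝ) - ξ*2 ≠ 0 := by intro h; exact hhalf (by linarith)
    rw [hP1, hQ1, hP2, hQ2, hP3, hQ3]
    field_simp
    ring
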